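/- For every integer m ≥ 2, the matrix H indexed by the nonempty subsets of [m−1], with entries H_{S,T} = 1/(|S∪T|+1) − 1/((|S|+1)(|T|+1)) for nonempty S, T ⊆ [m−1], is symmetric positive definite. -/

import Mathlib

open Finset Matrix

/-- The nonempty subsets of `[m−1] = {1, …, m−1}`; there are `2^(m−1) − 1` of them. -/
abbrev NESubset (m : ℕ) := {S : Finset (Fin (m - 1)) // S.Nonempty}

noncomputable def pw (n : ℕ) (A : Finset (Fin n)) : ℝ :=
  1 / ((n + 1) * (n.choose A.card))

lemma card_le_n {n : ℕ} (A : Finset (Fin n)) : A.card ≤ n := by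
  simpa using Finset.card_le_univ A

lemma pw_pos (n : ℕ) (A : Finset (Fin n)) : 0 < pw n A := by
  have h := Nat.choose_pos (card_le_n A)
  unfold pw
  positivity

/-- Key identity: the `pw`-mass of all supersets of `U` is `1/(|U|+1)`. -/
lemma sum_pw (n : ℕ) (U : Finset (Fin n)) :
    ∑ A ∈ Finset.univ.filter (fun A => U ⊆ A), pw n A = 1 / ((U.card : ℝ) + 1) := by
  have hu : U.card ≤ n := card_le_n U
  -- reindex by B = A \ U, over subsets of Uᶜ
  have h1 : ∑ A ∈ Finset.univ.filter (fun A => U ⊆ A), pw n A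
      = ∑ B ∈ Uᶜ.powerset, pw n (U ∪ B) := by
    refine Finset.sum_nbij' (fun A => A \ U) (fun B => U ∪ B) ?_ ?_ ?_ ?_ ?_
    · intro A hA
      simp only [mem_powerset]
      intro x hx
      simp only [mem_sdiff] at hx
      simp [mem_compl, hx.2]
    · intro B hB
      simp [Finset.subset_union_left]
    · intro A hA
      simp only [mem_filter] at hA
      exact Finset.union_sdiff_of_subset hA.2
    · intro B hB
      rw [mem_powerset] at hB
      have hd : Disjoint U B := by
        refine Finset.disjoint_left.2 fun a ha haB => ?_
        have := hB haB
        simp [mem_compl, ha] at this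
      exact Finset.union_sdiff_cancel_left hd
    · intro A hA
      simp only [mem_filter] at hA
      rw [Finset.union_sdiff_of_subset hA.2]
  rw [h1]
  have h2 : ∀ B ∈ Uᶜ.powerset, pw n (U ∪ B)
      = (1 : ℝ) / ((n + 1) * (n.choose (U.card + B.card))) := by
    intro B hB
    rw [mem_powerset] at hB
    have hd : Disjoint U B := by
      refine Finset.disjoint_left.2 fun a ha haB => ?_
      have := hB haB
      simp [mem_compl, ha] at this
    unfold pw
    rw [Finset.card_union_of_disjoint hd]
  rw [Finset.sum_congr rfl h2]
  rw [Finset.sum_powerset_apply_card (f := fun j => (1 : ℝ) / ((n + 1) * (n.choose (U.card + j))))]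
  rw [Finset.card_compl, Fintype.card_fin]
  set u := U.card with hu'
  set k := n - u with hk
  have hnk : u + k = n := by omega
  -- each term equals ((u+j).choose u) / ((n+1) * n.choose u)
  have h3 : ∀ j ∈ Finset.range (k + 1),
      (k.choose j) • ((1 : ℝ) / ((n + 1) * (n.choose (u + j))))
        = ((j + u).choose u : ℝ) * ((1 : ℝ) / ((n + 1) * (n.choose u))) := by
    intro j hj
    rw [Finset.mem_range] at hj
    have hjk : j ≤ k := by omega
    have hun : u + j ≤ n := by omega
    have hid : n.choose (u + j) * (u + j).choose u = n.choose u * k.choose j := by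
      have := Nat.choose_mul (n := n) (k := u + j) (s := u) (Nat.le_add_right u j)
      simpa [hk, Nat.add_sub_cancel_left] using this
    have hc1 : (0 : ℝ) < n.choose (u + j) := by exact_mod_cast Nat.choose_pos hun
    have hc2 : (0 : ℝ) < n.choose u := by exact_mod_cast Nat.choose_pos hu
    have hn1 : (0 : ℝ) < (n : ℝ) + 1 := by positivity
    rw [nsmul_eq_mul, mul_one_div, mul_one_div,
      div_eq_div_iff (by positivity) (by positivity)]
    have : ((n.choose (u + j) : ℝ)) * ((u + j).choose u) = (n.choose u : ℝ) * k.choose j := by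
      exact_mod_cast hid
    have hcomm : (j + u) = (u + j) := by omega
    rw [hcomm]
    nlinarith [this]
  rw [Finset.sum_congr rfl h3, ← Finset.sum_mul]
  have h4 : ∑ j ∈ Finset.range (k + 1), ((j + u).choose u : ℝ) = ((n + 1).choose (u + 1) : ℝ) := by
    have := Nat.sum_range_add_choose k u
    rw [show k + u + 1 = n + 1 by omega] at this
    exact_mod_cast congrArg (Nat.cast : ℕ → ℝ) this
  rw [h4]
  have h5 : (n + 1) * n.choose u = (n + 1).choose (u + 1) * (u + 1) := by
    simpa using Nat.add_one_mul_choose_eq n u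
  have hC : (0 : ℝ) < ((n + 1).choose (u + 1) : ℝ) := by
    exact_mod_cast Nat.choose_pos (by omega : u + 1 ≤ n + 1)
  have h5' : ((n : ℝ) + 1) * (n.choose u : ℝ) = ((n + 1).choose (u + 1) : ℝ) * ((u : ℝ) + 1) := by
    exact_mod_cast h5
  rw [h5']
  field_simp

theorem quad_pos (n : ℕ) (x : {S : Finset (Fin n) // S.Nonempty} → ℝ) (hx : x ≠ 0) :
    0 < ∑ S : {S : Finset (Fin n) // S.Nonempty}, ∑ T : {S : Finset (Fin n) // S.Nonempty},
      x S * x T * (1 / (((S.1 ∪ T.1).card : ℝ) + 1)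
        - 1 / (((S.1.card : ℝ) + 1) * ((T.1.card : ℝ) + 1))) := by
  classical
  obtain ⟨x', hx'def⟩ : ∃ x' : Finset (Fin n) → ℝ,
      x' = fun S => if h : S.Nonempty then x ⟨S, h⟩ else 0 := ⟨_, rfl⟩
  have hx'e : x' ∅ = 0 := by
    rw [hx'def]
    simp
  have hx'v : ∀ S : {S : Finset (Fin n) // S.Nonempty}, x' S.1 = x S := by
    intro S
    rw [hx'def]
    exact dif_pos S.2
  obtain ⟨y, hydef⟩ : ∃ y : Finset (Fin n) → ℝ,
      y = fun A => ∑ S ∈ A.powerset, x' S := ⟨_, rfl⟩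
  obtain ⟨μ, hμdef⟩ : ∃ μ : ℝ, μ = ∑ A : Finset (Fin n), y A * pw n A := ⟨_, rfl⟩
  have hz : ∀ A : Finset (Fin n),
      (∑ S : Finset (Fin n), if S ⊆ A then x' S else 0) = y A := by
    intro A
    simp only [hydef]
    rw [← Finset.sum_filter]
    apply Finset.sum_congr _ (fun _ _ => rfl)
    ext S
    simp [Finset.mem_powerset]
  have hconv : ∀ G : Finset (Fin n) → ℝ, G ∅ = 0 →
      (∑ S : {S : Finset (Fin n) // S.Nonempty}, G S.1) = ∑ S : Finset (Fin n), G S := by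
    intro G hG
    rw [← Finset.sum_filter_of_ne (s := Finset.univ)
      (p := fun S : Finset (Fin n) => S.Nonempty) (f := G) ?_]
    · exact (Finset.sum_subtype (p := fun S : Finset (Fin n) => S.Nonempty)
        (Finset.univ.filter (fun S : Finset (Fin n) => S.Nonempty))
        (fun S => by simp) G).symm
    · intro S _ hS
      rw [Finset.nonempty_iff_ne_empty]
      intro hSe
      exact hS (hSe ▸ hG)
  have hpair : ∀ S T : Finset (Fin n),
      x' S * x' T * (1 / (((S ∪ T).card : ℝ) + 1))
        = ∑ A : Finset (Fin n),
            (if S ⊆ A then x' S else 0) * (if T ⊆ A then x' T else 0) * pw n A := by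
    intro S T
    rw [← sum_pw n (S ∪ T), Finset.mul_sum, Finset.sum_filter]
    apply Finset.sum_congr rfl
    intro A _
    by_cases h1 : S ⊆ A <;> by_cases h2 : T ⊆ A <;>
      simp [Finset.union_subset_iff, h1, h2]
  have hsingle : ∀ S : Finset (Fin n),
      x' S * (1 / ((S.card : ℝ) + 1))
        = ∑ A : Finset (Fin n), (if S ⊆ A then x' S else 0) * pw n A := by
    intro S
    rw [← sum_pw n S, Finset.mul_sum, Finset.sum_filter]
    apply Finset.sum_congr rfl
    intro A _
    by_cases h1 : S ⊆ A <;> simp [h1]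
  -- convert the subtype double sum to a Finset double sum
  have e1 : (∑ S : {S : Finset (Fin n) // S.Nonempty}, ∑ T : {S : Finset (Fin n) // S.Nonempty},
        x S * x T * (1 / (((S.1 ∪ T.1).card : ℝ) + 1)
          - 1 / (((S.1.card : ℝ) + 1) * ((T.1.card : ℝ) + 1))))
      = ∑ S : Finset (Fin n), ∑ T : Finset (Fin n),
        x' S * x' T * (1 / (((S ∪ T).card : ℝ) + 1)
          - 1 / (((S.card : ℝ) + 1) * ((T.card : ℝ) + 1))) := by
    rw [← hconv (fun S => ∑ T : Finset (Fin n),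
        x' S * x' T * (1 / (((S ∪ T).card : ℝ) + 1)
          - 1 / (((S.card : ℝ) + 1) * ((T.card : ℝ) + 1))))
      (by apply Finset.sum_eq_zero; intro T _; simp [hx'e])]
    apply Finset.sum_congr rfl
    intro S _
    rw [← hconv (fun T => x' S.1 * x' T * (1 / (((S.1 ∪ T).card : ℝ) + 1)
          - 1 / (((S.1.card : ℝ) + 1) * ((T.card : ℝ) + 1))))
      (by simp [hx'e])]
    apply Finset.sum_congr rfl
    intro T _
    rw [hx'v S, hx'v T]
  rw [e1]
  -- split the double sum
  have e2 : (∑ S : Finset (Fin n), ∑ T : Finset (Fin n),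
        x' S * x' T * (1 / (((S ∪ T).card : ℝ) + 1)
          - 1 / (((S.card : ℝ) + 1) * ((T.card : ℝ) + 1))))
      = (∑ S : Finset (Fin n), ∑ T : Finset (Fin n),
          x' S * x' T * (1 / (((S ∪ T).card : ℝ) + 1)))
        - (∑ S : Finset (Fin n), ∑ T : Finset (Fin n),
          x' S * x' T * (1 / (((S.card : ℝ) + 1) * ((T.card : ℝ) + 1)))) := by
    rw [← Finset.sum_sub_distrib]
    apply Finset.sum_congr rfl
    intro S _
    rw [← Finset.sum_sub_distrib]
    apply Finset.sum_congr rfl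
    intro T _
    ring
  rw [e2]
  -- part 1
  have e3 : (∑ S : Finset (Fin n), ∑ T : Finset (Fin n),
        x' S * x' T * (1 / (((S ∪ T).card : ℝ) + 1)))
      = ∑ A : Finset (Fin n), y A * y A * pw n A := by
    calc (∑ S : Finset (Fin n), ∑ T : Finset (Fin n),
          x' S * x' T * (1 / (((S ∪ T).card : ℝ) + 1)))
        = ∑ S : Finset (Fin n), ∑ T : Finset (Fin n), ∑ A : Finset (Fin n),
            (if S ⊆ A then x' S else 0) * (if T ⊆ A then x' T else 0) * pw n A := by
          apply Finset.sum_congr rfl; intro S _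
          apply Finset.sum_congr rfl; intro T _
          exact hpair S T
      _ = ∑ S : Finset (Fin n), ∑ A : Finset (Fin n), ∑ T : Finset (Fin n),
            (if S ⊆ A then x' S else 0) * (if T ⊆ A then x' T else 0) * pw n A := by
          apply Finset.sum_congr rfl; intro S _
          exact Finset.sum_comm
      _ = ∑ A : Finset (Fin n), ∑ S : Finset (Fin n), ∑ T : Finset (Fin n),
            (if S ⊆ A then x' S else 0) * (if T ⊆ A then x' T else 0) * pw n A :=
          Finset.sum_comm
      _ = ∑ A : Finset (Fin n), y A * y A * pw n A := by
          apply Finset.sum_congr rfl; intro A _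
          rw [← hz A]
          rw [Finset.sum_congr rfl (fun S _ => by
            rw [← Finset.sum_mul, ← Finset.mul_sum] :
            ∀ S ∈ Finset.univ, _ = ((if S ⊆ A then x' S else 0)
              * ∑ T : Finset (Fin n), (if T ⊆ A then x' T else 0)) * pw n A)]
          rw [← Finset.sum_mul, ← Finset.sum_mul]
  -- part 2
  have e4 : (∑ S : Finset (Fin n), ∑ T : Finset (Fin n),
        x' S * x' T * (1 / (((S.card : ℝ) + 1) * ((T.card : ℝ) + 1))))
      = μ * μ := by
    have hμ' : (∑ S : Finset (Fin n), x' S * (1 / ((S.card : ℝ) + 1))) = μ := by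
      rw [Finset.sum_congr rfl (fun S _ => hsingle S), Finset.sum_comm, hμdef]
      apply Finset.sum_congr rfl
      intro A _
      rw [← Finset.sum_mul, hz A]
    calc (∑ S : Finset (Fin n), ∑ T : Finset (Fin n),
          x' S * x' T * (1 / (((S.card : ℝ) + 1) * ((T.card : ℝ) + 1))))
        = ∑ S : Finset (Fin n), ∑ T : Finset (Fin n),
            (x' S * (1 / ((S.card : ℝ) + 1))) * (x' T * (1 / ((T.card : ℝ) + 1))) := by
          apply Finset.sum_congr rfl; intro S _
          apply Finset.sum_congr rfl; intro T _
          rw [one_div, mul_inv]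
          ring
      _ = (∑ S : Finset (Fin n), x' S * (1 / ((S.card : ℝ) + 1)))
            * (∑ T : Finset (Fin n), x' T * (1 / ((T.card : ℝ) + 1))) :=
          (Finset.sum_mul_sum _ _ _ _).symm
      _ = μ * μ := by rw [hμ']
  rw [e3, e4]
  -- total mass one
  have hsum1 : ∑ A : Finset (Fin n), pw n A = 1 := by
    have := sum_pw n (∅ : Finset (Fin n))
    simpa [Finset.filter_true_of_mem (fun A _ => Finset.empty_subset A)] using this
  -- variance identity
  have hvar : (∑ A : Finset (Fin n), (y A - μ) ^ 2 * pw n A)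
      = (∑ A : Finset (Fin n), y A * y A * pw n A) - μ * μ := by
    have : ∀ A ∈ (Finset.univ : Finset (Finset (Fin n))),
        (y A - μ) ^ 2 * pw n A
          = y A * y A * pw n A - (2 * μ) * (y A * pw n A) + (μ * μ) * pw n A :=
      fun A _ => by ring
    rw [Finset.sum_congr rfl this, Finset.sum_add_distrib, Finset.sum_sub_distrib,
      ← Finset.mul_sum, ← Finset.mul_sum, ← hμdef, hsum1]
    ring
  rw [← hvar]
  -- there is some A with y A ≠ μ
  have hy0 : y ∅ = 0 := by
    simp [hydef, hx'e]
  have hA : ∃ A : Finset (Fin n), y A ≠ μ := by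
    by_contra h
    push_neg at h
    have hμ0 : μ = 0 := by rw [← h ∅, hy0]
    have hyz : ∀ A : Finset (Fin n), y A = 0 := fun A => by rw [h A, hμ0]
    have hx0 : ∀ S : Finset (Fin n), x' S = 0 := by
      intro S
      induction S using Finset.strongInduction with
      | _ S ih =>
        have h1 : x' S + ∑ T ∈ S.powerset.erase S, x' T = ∑ T ∈ S.powerset, x' T :=
          Finset.add_sum_erase _ _ (Finset.mem_powerset_self S)
        have hyS : y S = ∑ T ∈ S.powerset, x' T := by simp only [hydef]
        have h2 : ∑ T ∈ S.powerset.erase S, x' T = 0 := by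
          apply Finset.sum_eq_zero
          intro T hT
          rw [Finset.mem_erase, Finset.mem_powerset] at hT
          exact ih T (lt_of_le_of_ne hT.2 hT.1)
        have := h1
        rw [h2, ← hyS, hyz S, add_zero] at this
        exact this
    apply hx
    funext S
    rw [Pi.zero_apply, ← hx'v S, hx0 S.1]
  obtain ⟨A₀, hA₀⟩ := hA
  apply Finset.sum_pos'
  · intro A _
    have := pw_pos n A
    positivity
  · refine ⟨A₀, Finset.mem_univ _, ?_⟩
    have h1 := pw_pos n A₀
    have h2 : 0 < (y A₀ - μ) ^ 2 :=
      lt_of_le_of_ne (sq_nonneg _) (Ne.symm (pow_ne_zero 2 (sub_ne_zero.mpr hA₀)))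
    exact mul_pos h2 h1

theorem H_posdef (m : ℕ) (hm : 2 ≤ m) :
    let H : Matrix (NESubset m) (NESubset m) ℝ :=
      Matrix.of fun S T =>
        1 / (((S.1 ∪ T.1).card : ℝ) + 1) -
          1 / (((S.1.card : ℝ) + 1) * ((T.1.card : ℝ) + 1))
    H.IsSymm ∧ H.PosDef := by
  intro H
  have hsymm : H.IsSymm := by
    ext S T
    simp only [H, Matrix.transpose_apply, Matrix.of_apply]
    rw [Finset.union_comm, mul_comm]
  refine ⟨hsymm, Matrix.PosDef.of_dotProduct_mulVec_pos ?_ ?_⟩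
  · -- Hermitian
    ext S T
    simp only [Matrix.conjTranspose_apply, Matrix.of_apply, star_trivial, H]
    rw [Finset.union_comm, mul_comm]
  · intro x hx
    have hq := quad_pos (m - 1) x hx
    have e : dotProduct (star x) (H *ᵥ x)
        = ∑ S : NESubset m, ∑ T : NESubset m,
            x S * x T * (1 / (((S.1 ∪ T.1).card : ℝ) + 1)
              - 1 / (((S.1.card : ℝ) + 1) * ((T.1.card : ℝ) + 1))) := by
      simp only [dotProduct, Matrix.mulVec, Pi.star_apply, star_trivial, Matrix.of_apply, H]
      apply Finset.sum_congr rfl; intro S _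
      rw [Finset.mul_sum]
      apply Finset.sum_congr rfl; intro T _
      ring
    rw [e]
    exact hq
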